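/- arXiv:2510.11910 — 2 statements merged into one kernel-verified Lean document; each statement's English description precedes it below -/
import Mathlib

section
/- Let Σ₀ = U diag(a₁,…,a_d) Uᵀ and Σ₁ = U diag(b₁,…,b_d) Uᵀ with U ∈ ℝ^{d×d} orthogonal and a_i, b_i > 0, and let λ ≥ 0 be such that λ ≠ 2√(a_i) for every i with b_i > a_i. Consider the feasible set K(Σ₀,Σ₁) of matrices K ∈ ℝ^{d×d} for which the block matrix [[Σ₀, K],[Kᵀ, Σ₁]] is positive semidefinite, and the objective F(K) := tr(Σ₀) + tr(Σ₁) − 2 tr(K) + λ‖(Kᵀ Σ₀^{−1} − I) Σ₀^{1/2}‖_{S1}. Then F is minimized over K(Σ₀,Σ₁) at K* = U diag(√(a₁b₁)·m₁^⋆, …, √(a_d b_d)·m_d^⋆) Uᵀ, where m_i^⋆ = 1 if b_i ≤ a_i or (b_i > a_i and λ < 2√(a_i)), and m_i^⋆ = √(a_i/b_i) if b_i > a_i and λ > 2√(a_i); the associated barycentric matrix A_λ := (K*)ᵀ Σ₀^{−1} equals U diag(α₁^⋆,…,α_d^⋆) Uᵀ with α_i^⋆ = √(b_i/a_i) if b_i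 ≤ a_i or (b_i > a_i and λ < 2√(a_i)), and α_i^⋆ = 1 if b_i > a_i and λ > 2√(a_i). -/
open Matrix BigOperators

section PosSemidefSqrt

open scoped ComplexOrder

/-- The positive semidefinite square root of a positive semidefinite matrix
(the definition `Matrix.PosSemidef.sqrt` of the older Mathlib, removed since). -/
noncomputable def Matrix.PosSemidef.sqrt {n : Type*} [Fintype n] [DecidableEq n]
    {𝕜 : Type*} [RCLike 𝕜] {A : Matrix n n 𝕜} (hA : A.PosSemidef) : Matrix n n 𝕜 :=
  hA.1.eigenvectorUnitary.1 * diagonal ((↑) ∘ (√·) ∘ hA.1.eigenvalues) *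
    (star hA.1.eigenvectorUnitary : Matrix n n 𝕜)

end PosSemidefSqrt

/-- The nuclear (Schatten-1) norm of a real matrix. -/
noncomputable def nuclearNorm {m n : Type*} [Fintype m] [Fintype n] [DecidableEq n]
    (M : Matrix m n ℝ) : ℝ :=
  (Matrix.PosSemidef.sqrt (Matrix.posSemidef_conjTranspose_mul_self M)).trace

namespace Matrix.PosSemidef

open scoped MatrixOrder

lemma sqrt_eq_cfcSqrt {n : Type*} [Fintype n] [DecidableEq n] {A : Matrix n n ℝ}
    (hA : A.PosSemidef) : hA.sqrt = CFC.sqrt A := by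
  rw [CFC.sqrt_eq_cfc, cfc_nnreal_eq_real _ A (Matrix.nonneg_iff_posSemidef.mpr hA),
    hA.1.cfc_eq, IsHermitian.cfc, Unitary.conjStarAlgAut_apply, Matrix.PosSemidef.sqrt]
  congr 2
  congr 1
  funext i
  simp only [Function.comp_apply]
  rw [Real.coe_sqrt, Real.coe_toNNReal _ (hA.eigenvalues_nonneg i)]

lemma posSemidef_sqrt {n : Type*} [Fintype n] [DecidableEq n] {A : Matrix n n ℝ}
    (hA : A.PosSemidef) : hA.sqrt.PosSemidef := by
  rw [sqrt_eq_cfcSqrt]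
  exact Matrix.nonneg_iff_posSemidef.mp (CFC.sqrt_nonneg A)

lemma sqrt_mul_self {n : Type*} [Fintype n] [DecidableEq n] {A : Matrix n n ℝ}
    (hA : A.PosSemidef) : hA.sqrt * hA.sqrt = A := by
  rw [sqrt_eq_cfcSqrt]
  exact CFC.sqrt_mul_sqrt_self A (Matrix.nonneg_iff_posSemidef.mpr hA)

lemma eq_sqrt_of_sq_eq {n : Type*} [Fintype n] [DecidableEq n] {A B : Matrix n n ℝ}
    (hB : B.PosSemidef) (hA : A.PosSemidef) (h : B ^ 2 = A) : B = hA.sqrt := by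
  rw [sqrt_eq_cfcSqrt]
  exact (CFC.sqrt_unique (by rw [← pow_two]; exact h) (Matrix.nonneg_iff_posSemidef.mpr hB)).symm

end Matrix.PosSemidef

lemma Matrix.IsHermitian.star_mul_self_mul_eq_diagonal {n : Type*} [Fintype n] [DecidableEq n]
    {A : Matrix n n ℝ} (hA : A.IsHermitian) :
    star hA.eigenvectorUnitary.1 * A * hA.eigenvectorUnitary.1
      = diagonal (RCLike.ofReal ∘ hA.eigenvalues) := by
  have h := hA.spectral_theorem
  simp only [Unitary.conjStarAlgAut_apply] at h
  calc star hA.eigenvectorUnitary.1 * A * hA.eigenvectorUnitary.1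
      = star hA.eigenvectorUnitary.1 * (hA.eigenvectorUnitary.1
          * diagonal (RCLike.ofReal ∘ hA.eigenvalues) * star hA.eigenvectorUnitary.1)
          * hA.eigenvectorUnitary.1 := by rw [← h]
    _ = (star hA.eigenvectorUnitary.1 * hA.eigenvectorUnitary.1)
          * diagonal (RCLike.ofReal ∘ hA.eigenvalues)
          * (star hA.eigenvectorUnitary.1 * hA.eigenvectorUnitary.1) := by
        simp only [Matrix.mul_assoc]
    _ = diagonal (RCLike.ofReal ∘ hA.eigenvalues) := by
        rw [Matrix.mem_unitaryGroup_iff'.mp hA.eigenvectorUnitary.2, Matrix.one_mul, Matrix.mul_one]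

/-- The feasible set of cross-covariances: matrices `K` such that the block matrix
`[[Σ₀, K], [Kᵀ, Σ₁]]` is positive semidefinite. -/
def crossCovFeasible {d : ℕ} (Sigma0 Sigma1 : Matrix (Fin d) (Fin d) ℝ) :
    Set (Matrix (Fin d) (Fin d) ℝ) :=
  {K | (Matrix.fromBlocks Sigma0 K Kᵀ Sigma1).PosSemidef}

section auxiliary

variable {n : Type*} [Fintype n] [DecidableEq n]

lemma aux_conj_mul_conj (V A B : Matrix n n ℝ) (h : V * star V = 1) :
    (star V * A * V) * (star V * B * V) = star V * (A * B) * V := by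
  calc (star V * A * V) * (star V * B * V)
      = star V * A * (V * star V) * (B * V) := by simp only [Matrix.mul_assoc]
    _ = star V * (A * B) * V := by rw [h, Matrix.mul_one]; simp only [Matrix.mul_assoc]

lemma aux_sqrt_unique {A B : Matrix n n ℝ} (hA : A.PosSemidef) (hB : B.PosSemidef)
    (h : B * B = A) : hA.sqrt = B :=
  (hB.eq_sqrt_of_sq_eq hA (by rw [pow_two, h])).symm

lemma aux_trace_le_nuclearNorm (N : Matrix n n ℝ) : N.trace ≤ nuclearNorm N := by
  classical
  set hH := Matrix.posSemidef_conjTranspose_mul_self N with hHdef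
  set V : Matrix n n ℝ := (hH.1.eigenvectorUnitary : Matrix n n ℝ) with hV
  have hVmem := hH.1.eigenvectorUnitary.2
  have hVl : star V * V = 1 := Matrix.mem_unitaryGroup_iff'.mp hVmem
  have hVr : V * star V = 1 := Matrix.mem_unitaryGroup_iff.mp hVmem
  have hdiag : star V * (Nᴴ * N) * V = Matrix.diagonal (hH.1.eigenvalues) := by
    have := hH.1.star_mul_self_mul_eq_diagonal
    simpa [hV] using this
  have hsqrt : hH.sqrt = V * Matrix.diagonal (fun i => Real.sqrt (hH.1.eigenvalues i)) * star V := by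
    rw [Matrix.PosSemidef.sqrt]; rfl
  have htr : nuclearNorm N = ∑ i, Real.sqrt (hH.1.eigenvalues i) := by
    rw [nuclearNorm, hsqrt, Matrix.trace_mul_cycle, hVl, Matrix.one_mul, Matrix.trace_diagonal]
  set B : Matrix n n ℝ := star V * N * V with hB
  have hBB : Bᴴ * B = Matrix.diagonal hH.1.eigenvalues := by
    have h1 : Bᴴ = star V * Nᴴ * V := by
      rw [hB]
      simp only [Matrix.star_eq_conjTranspose, Matrix.conjTranspose_mul,
        Matrix.conjTranspose_conjTranspose, Matrix.mul_assoc]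
    rw [h1, hB, aux_conj_mul_conj V Nᴴ N hVr, hdiag]
  have htrN : N.trace = B.trace := by
    rw [hB]
    conv_rhs => rw [Matrix.trace_mul_cycle, hVr, Matrix.one_mul]
  rw [htrN, htr, Matrix.trace]
  apply Finset.sum_le_sum
  intro i _
  have h1 : B i i * B i i ≤ hH.1.eigenvalues i := by
    have h2 := congrFun (congrFun hBB i) i
    rw [Matrix.mul_apply, Matrix.diagonal_apply_eq] at h2
    have h3 : ∀ j, Bᴴ i j * B j i = B j i * B j i := by
      intro j; rw [Matrix.conjTranspose_apply]; simp
    rw [Finset.sum_congr rfl (fun j _ => h3 j)] at h2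
    calc B i i * B i i ≤ ∑ j, B j i * B j i :=
          Finset.single_le_sum (f := fun j => B j i * B j i)
            (fun j _ => mul_self_nonneg _) (Finset.mem_univ i)
      _ = hH.1.eigenvalues i := h2
  calc B i i ≤ |B i i| := le_abs_self _
    _ = Real.sqrt (B i i * B i i) := by rw [← Real.sqrt_mul_self_eq_abs]
    _ ≤ Real.sqrt (hH.1.eigenvalues i) := Real.sqrt_le_sqrt h1

lemma aux_nuclearNorm_conj (V M : Matrix n n ℝ) (hVl : star V * V = 1) (hVr : V * star V = 1) :
    nuclearNorm (star V * M * V) = nuclearNorm M := by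
  classical
  set R := (Matrix.posSemidef_conjTranspose_mul_self M).sqrt with hR
  have hRps := (Matrix.posSemidef_conjTranspose_mul_self M).posSemidef_sqrt
  have hRsq : R * R = Mᴴ * M := (Matrix.posSemidef_conjTranspose_mul_self M).sqrt_mul_self
  have hconj : (star V * M * V)ᴴ * (star V * M * V) = star V * (Mᴴ * M) * V := by
    have h1 : (star V * M * V)ᴴ = star V * Mᴴ * V := by
      simp only [Matrix.star_eq_conjTranspose, Matrix.conjTranspose_mul,
        Matrix.conjTranspose_conjTranspose, Matrix.mul_assoc]
    rw [h1, aux_conj_mul_conj V Mᴴ M hVr]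
  have hsq : (star V * R * V) * (star V * R * V) = star V * (Mᴴ * M) * V := by
    rw [aux_conj_mul_conj V R R hVr, hRsq]
  have hps : (star V * R * V).PosSemidef := by
    simpa only [Matrix.star_eq_conjTranspose, Matrix.mul_assoc] using
      hRps.conjTranspose_mul_mul_same V
  have heq : (Matrix.posSemidef_conjTranspose_mul_self (star V * M * V)).sqrt = star V * R * V :=
    aux_sqrt_unique _ hps (by rw [hsq, hconj])
  rw [nuclearNorm, heq, Matrix.trace_mul_cycle, hVr, Matrix.one_mul, nuclearNorm]

lemma aux_nuclearNorm_mul_orthogonal (N S : Matrix n n ℝ) (hSl : star S * S = 1)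
    (hSr : S * star S = 1) : nuclearNorm (N * S) = nuclearNorm N := by
  classical
  set R := (Matrix.posSemidef_conjTranspose_mul_self N).sqrt with hR
  have hRps := (Matrix.posSemidef_conjTranspose_mul_self N).posSemidef_sqrt
  have hRsq : R * R = Nᴴ * N := (Matrix.posSemidef_conjTranspose_mul_self N).sqrt_mul_self
  have hconj : (N * S)ᴴ * (N * S) = star S * (Nᴴ * N) * S := by
    simp only [Matrix.star_eq_conjTranspose, Matrix.conjTranspose_mul, Matrix.mul_assoc]
  have hsq : (star S * R * S) * (star S * R * S) = star S * (Nᴴ * N) * S := by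
    rw [aux_conj_mul_conj S R R hSr, hRsq]
  have hps : (star S * R * S).PosSemidef := by
    simpa only [Matrix.star_eq_conjTranspose, Matrix.mul_assoc] using
      hRps.conjTranspose_mul_mul_same S
  have heq : (Matrix.posSemidef_conjTranspose_mul_self (N * S)).sqrt = star S * R * S :=
    aux_sqrt_unique _ hps (by rw [hsq, hconj])
  rw [nuclearNorm, heq, Matrix.trace_mul_cycle, hSr, Matrix.one_mul, nuclearNorm]

lemma aux_nuclearNorm_diagonal (c : n → ℝ) :
    nuclearNorm (Matrix.diagonal c) = ∑ i, |c i| := by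
  classical
  have hps : (Matrix.diagonal (fun i => |c i|)).PosSemidef :=
    Matrix.posSemidef_diagonal_iff.mpr fun i => abs_nonneg _
  have hsq : Matrix.diagonal (fun i => |c i|) * Matrix.diagonal (fun i => |c i|)
      = (Matrix.diagonal c)ᴴ * Matrix.diagonal c := by
    rw [Matrix.diagonal_mul_diagonal, Matrix.diagonal_conjTranspose,
      Matrix.diagonal_mul_diagonal]
    ext i j
    simp [Matrix.diagonal, abs_mul_abs_self]
  have heq := aux_sqrt_unique (Matrix.posSemidef_conjTranspose_mul_self (Matrix.diagonal c))
    hps hsq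
  rw [nuclearNorm, heq, Matrix.trace_diagonal]

lemma aux_sum_abs_diag_le_nuclearNorm (N : Matrix n n ℝ) :
    ∑ i, |N i i| ≤ nuclearNorm N := by
  classical
  set s : n → ℝ := fun i => if 0 ≤ N i i then 1 else -1 with hs
  have hss : ∀ i, s i * s i = 1 := by
    intro i; rw [hs]; dsimp only; split <;> norm_num
  set S := Matrix.diagonal s with hS
  have hSstar : star S = S := by
    rw [hS, Matrix.star_eq_conjTranspose, Matrix.diagonal_conjTranspose]
    congr 1
  have hSl : star S * S = 1 := by
    rw [hSstar, hS, Matrix.diagonal_mul_diagonal,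
      show (fun i => s i * s i) = fun _ => (1:ℝ) from funext hss, Matrix.diagonal_one]
  have hSr : S * star S = 1 := by rw [hSstar]; rw [hSstar] at hSl; exact hSl
  have htr : (N * S).trace = ∑ i, |N i i| := by
    rw [Matrix.trace]
    apply Finset.sum_congr rfl
    intro i _
    rw [Matrix.diag_apply, hS, Matrix.mul_diagonal, hs]
    dsimp only
    split
    · rw [mul_one, abs_of_nonneg ‹_›]
    · rw [mul_neg_one, abs_of_neg (by linarith [not_le.mp ‹¬ 0 ≤ N i i›])]
  calc ∑ i, |N i i| = (N * S).trace := htr.symm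
    _ ≤ nuclearNorm (N * S) := aux_trace_le_nuclearNorm _
    _ = nuclearNorm N := aux_nuclearNorm_mul_orthogonal N S hSl hSr

lemma aux_scalar_key {a b lam k : ℝ} (ha : 0 < a) (hb : 0 < b) (hlam0 : 0 ≤ lam)
    (hne : a < b → lam ≠ 2 * Real.sqrt a) (hk : k ^ 2 ≤ a * b) :
    (if b ≤ a ∨ lam < 2 * Real.sqrt a
      then -2 * (Real.sqrt a * Real.sqrt b) + lam * |Real.sqrt b - Real.sqrt a|
      else -2 * a)
    ≤ -2 * k + lam * |k / Real.sqrt a - Real.sqrt a| := by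
  set sa := Real.sqrt a with hsa
  set sb := Real.sqrt b with hsb
  have hsa0 : 0 < sa := Real.sqrt_pos.mpr ha
  have hsb0 : 0 < sb := Real.sqrt_pos.mpr hb
  have hsa2 : sa * sa = a := Real.mul_self_sqrt ha.le
  have hsb2 : sb * sb = b := Real.mul_self_sqrt hb.le
  have habs : |k| ≤ sa * sb := by
    rw [← Real.sqrt_sq_eq_abs, hsa, hsb, ← Real.sqrt_mul ha.le]
    exact Real.sqrt_le_sqrt hk
  have hkab : k ≤ sa * sb := le_trans (le_abs_self k) habs
  set t := k / sa with ht
  have hkt : k = t * sa := by rw [ht, div_mul_cancel₀ _ hsa0.ne']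
  have htb' : t ≤ sb := by
    rw [ht, div_le_iff₀ hsa0]; nlinarith
  have h1 : t - sa ≤ |t - sa| := le_abs_self _
  have h2 : sa - t ≤ |t - sa| := by rw [abs_sub_comm]; exact le_abs_self _
  split
  · rename_i hcase
    rcases le_or_gt sb sa with hba | hba
    · have habs2 : |sb - sa| = sa - sb := by rw [abs_of_nonpos (by linarith)]; ring
      rw [habs2, hkt]
      nlinarith [mul_le_mul_of_nonneg_left h2 hlam0]
    · have hlt : lam < 2 * sa := by
        rcases hcase with h | h
        · exfalso; nlinarith
        · exact h
      have habs2 : |sb - sa| = sb - sa := by rw [abs_of_nonneg (by linarith)]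
      rw [habs2, hkt]
      nlinarith [mul_le_mul_of_nonneg_left h1 hlam0, mul_nonneg hlam0 (sub_nonneg.mpr htb')]
  · rename_i hcase
    push_neg at hcase
    obtain ⟨hab, hge⟩ := hcase
    have hgt : 2 * sa < lam := lt_of_le_of_ne hge (Ne.symm (hne hab))
    rw [hkt]
    rcases le_or_gt t sa with hta | hta
    · nlinarith [mul_le_mul_of_nonneg_left h2 hlam0]
    · nlinarith [mul_le_mul_of_nonneg_left h1 hlam0]

end auxiliary

/-- Gaussian barycentric displacement regularization with commuting covariances: the
nuclear-norm penalized displacement objective is minimized at the stated spectral solution,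
whose barycentric matrix prunes expanding directions past the threshold `2√(a_i)`. -/
theorem gaussian_barycentric_displacement_commuting
    {d : ℕ}
    (U : Matrix (Fin d) (Fin d) ℝ) (hU : U ∈ Matrix.orthogonalGroup (Fin d) ℝ)
    (a b : Fin d → ℝ) (ha : ∀ i, 0 < a i) (hb : ∀ i, 0 < b i)
    (Sigma0 Sigma1 : Matrix (Fin d) (Fin d) ℝ)
    (hSigma0 : Sigma0 = U * Matrix.diagonal a * Uᵀ)
    (hSigma1 : Sigma1 = U * Matrix.diagonal b * Uᵀ)
    (h₀ : Sigma0.PosDef)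
    (lam : ℝ) (hlam0 : 0 ≤ lam)
    (hlam : ∀ i, a i < b i → lam ≠ 2 * Real.sqrt (a i))
    -- the objective F(K) = tr Σ₀ + tr Σ₁ − 2 tr K + λ ‖(Kᵀ Σ₀⁻¹ − I) Σ₀^{1/2}‖_{S1}
    (F : Matrix (Fin d) (Fin d) ℝ → ℝ)
    (hF : ∀ K, F K = Sigma0.trace + Sigma1.trace - 2 * K.trace
        + lam * nuclearNorm ((Kᵀ * Sigma0⁻¹ - 1) * (Matrix.PosSemidef.sqrt h₀.posSemidef)))
    -- the optimal per-direction multipliers m_i^⋆ and the matrix K*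
    (mstar : Fin d → ℝ)
    (hmstar : ∀ i, mstar i =
        if b i ≤ a i ∨ lam < 2 * Real.sqrt (a i) then 1 else Real.sqrt (a i / b i))
    (Kstar : Matrix (Fin d) (Fin d) ℝ)
    (hKstar : Kstar = U * Matrix.diagonal (fun i => Real.sqrt (a i * b i) * mstar i) * Uᵀ)
    -- the associated barycentric coefficients α_i^⋆
    (αstar : Fin d → ℝ)
    (hαstar : ∀ i, αstar i =
        if b i ≤ a i ∨ lam < 2 * Real.sqrt (a i) then Real.sqrt (b i / a i) else 1) :
    Kstar ∈ crossCovFeasible Sigma0 Sigma1 ∧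
    (∀ K ∈ crossCovFeasible Sigma0 Sigma1, F Kstar ≤ F K) ∧
    Kstarᵀ * Sigma0⁻¹ = U * Matrix.diagonal αstar * Uᵀ := by
  classical
  have hUr : U * Uᵀ = 1 := by
    have := (Matrix.mem_orthogonalGroup_iff (Fin d) ℝ).mp hU
    exact this
  have hUl : Uᵀ * U = 1 := by
    have := (Matrix.mem_orthogonalGroup_iff' (Fin d) ℝ).mp hU
    exact this
  have hmulUD : ∀ A B : Matrix (Fin d) (Fin d) ℝ,
      (U * A * Uᵀ) * (U * B * Uᵀ) = U * (A * B) * Uᵀ := by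
    intro A B
    calc (U * A * Uᵀ) * (U * B * Uᵀ) = U * A * (Uᵀ * U) * (B * Uᵀ) := by
          simp only [Matrix.mul_assoc]
      _ = U * (A * B) * Uᵀ := by rw [hUl, Matrix.mul_one]; simp only [Matrix.mul_assoc]
  have hdeconj : ∀ A : Matrix (Fin d) (Fin d) ℝ, Uᵀ * (U * A * Uᵀ) * U = A := by
    intro A
    calc Uᵀ * (U * A * Uᵀ) * U = (Uᵀ * U) * A * (Uᵀ * U) := by simp only [Matrix.mul_assoc]
      _ = A := by rw [hUl, Matrix.one_mul, Matrix.mul_one]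
  have hpsdconj : ∀ c : Fin d → ℝ, (∀ i, 0 ≤ c i) →
      (U * Matrix.diagonal c * Uᵀ).PosSemidef := by
    intro c hc
    have := (Matrix.posSemidef_diagonal_iff.mpr hc).mul_mul_conjTranspose_same U
    rwa [Matrix.conjTranspose_eq_transpose_of_trivial] at this
  have htrconj : ∀ c : Fin d → ℝ, (U * Matrix.diagonal c * Uᵀ).trace = ∑ i, c i := by
    intro c
    rw [Matrix.trace_mul_cycle, hUl, Matrix.one_mul, Matrix.trace_diagonal]
  have hnnconj : ∀ M : Matrix (Fin d) (Fin d) ℝ,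
      nuclearNorm (U * M * Uᵀ) = nuclearNorm M := by
    intro M
    have hsUT : star Uᵀ = U := by
      rw [Matrix.star_eq_conjTranspose, Matrix.conjTranspose_eq_transpose_of_trivial,
        Matrix.transpose_transpose]
    have := aux_nuclearNorm_conj (Uᵀ) M (by rw [hsUT]; exact hUr) (by rw [hsUT]; exact hUl)
    rwa [hsUT] at this
  -- multiplier bounds
  have hm0 : ∀ i, 0 < mstar i := by
    intro i; rw [hmstar]; split
    · norm_num
    · exact Real.sqrt_pos.mpr (div_pos (ha i) (hb i))
  have hm1 : ∀ i, mstar i ≤ 1 := by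
    intro i; rw [hmstar]; split
    · exact le_refl 1
    · rename_i h
      push_neg at h
      rw [show (1:ℝ) = Real.sqrt 1 from (Real.sqrt_one).symm]
      apply Real.sqrt_le_sqrt
      rw [div_le_one (hb i)]
      exact h.1.le
  set κ : Fin d → ℝ := fun i => Real.sqrt (a i * b i) * mstar i with hκ
  -- inverse and square root of Sigma0
  have hSinv : Sigma0⁻¹ = U * Matrix.diagonal (fun i => (a i)⁻¹) * Uᵀ := by
    apply Matrix.inv_eq_right_inv
    rw [hSigma0, hmulUD, Matrix.diagonal_mul_diagonal,
      show (fun i => a i * (a i)⁻¹) = fun _ => (1:ℝ) from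
        funext fun i => mul_inv_cancel₀ (ha i).ne', Matrix.diagonal_one, Matrix.mul_one, hUr]
  have hsqrt0 : h₀.posSemidef.sqrt = U * Matrix.diagonal (fun i => Real.sqrt (a i)) * Uᵀ := by
    apply aux_sqrt_unique
    · exact hpsdconj _ (fun i => Real.sqrt_nonneg _)
    · rw [hmulUD, Matrix.diagonal_mul_diagonal, hSigma0]
      rw [show (fun i => Real.sqrt (a i) * Real.sqrt (a i)) = a from
        funext fun i => Real.mul_self_sqrt (ha i).le]
  haveI : Invertible Sigma0 := h₀.isUnit.invertible
  have hfeas_iff : ∀ K : Matrix (Fin d) (Fin d) ℝ,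
      K ∈ crossCovFeasible Sigma0 Sigma1 ↔ (Sigma1 - Kᵀ * Sigma0⁻¹ * K).PosSemidef := by
    intro K
    have h := Matrix.PosDef.fromBlocks₁₁ K Sigma1 h₀
    rw [Matrix.conjTranspose_eq_transpose_of_trivial] at h
    exact h
  -- κ * a⁻¹ equals αstar
  have hsaa : ∀ i, Real.sqrt (a i) * Real.sqrt (a i) = a i :=
    fun i => Real.mul_self_sqrt (ha i).le
  have hκα : ∀ i, κ i * (a i)⁻¹ = αstar i := by
    intro i
    simp only [hκ]
    rw [hmstar i, hαstar i]
    split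
    · rw [mul_one, Real.sqrt_mul (ha i).le, Real.sqrt_div (hb i).le]
      rw [eq_div_iff (Real.sqrt_pos.mpr (ha i)).ne']
      field_simp [(ha i).ne']
      linear_combination Real.sqrt (b i) * hsaa i
    · rw [← Real.sqrt_mul (mul_nonneg (ha i).le (hb i).le)]
      rw [show a i * b i * (a i / b i) = a i * a i by field_simp [(hb i).ne']]
      rw [Real.sqrt_mul_self (ha i).le]
      exact mul_inv_cancel₀ (ha i).ne'
  -- κ in the pruned case
  have hκval : ∀ i, ¬(b i ≤ a i ∨ lam < 2 * Real.sqrt (a i)) → κ i = a i := by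
    intro i hi
    simp only [hκ]
    rw [hmstar i, if_neg hi, ← Real.sqrt_mul (mul_nonneg (ha i).le (hb i).le),
      show a i * b i * (a i / b i) = a i * a i by field_simp [(hb i).ne'],
      Real.sqrt_mul_self (ha i).le]
  have hκval' : ∀ i, κ i = Real.sqrt (a i) * Real.sqrt (b i) * mstar i := by
    intro i; simp only [hκ]; rw [Real.sqrt_mul (ha i).le]
  -- part 1: feasibility of Kstar
  have hKstarT : Kstarᵀ = Kstar := by
    rw [hKstar]
    simp [Matrix.transpose_mul, Matrix.diagonal_transpose, Matrix.mul_assoc]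
  have hSchurK : Sigma1 - Kstarᵀ * Sigma0⁻¹ * Kstar
      = U * Matrix.diagonal (fun i => b i - κ i * (a i)⁻¹ * κ i) * Uᵀ := by
    rw [hKstarT, hKstar, hSinv, hSigma1, hmulUD, hmulUD]
    rw [← Matrix.diagonal_sub, Matrix.mul_sub, Matrix.sub_mul]
    congr 2
    rw [Matrix.diagonal_mul_diagonal, Matrix.diagonal_mul_diagonal]
  have hfeasK : Kstar ∈ crossCovFeasible Sigma0 Sigma1 := by
    rw [hfeas_iff, hSchurK]
    apply hpsdconj
    intro i
    have hab : Real.sqrt (a i * b i) * Real.sqrt (a i * b i) = a i * b i :=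
      Real.mul_self_sqrt (mul_nonneg (ha i).le (hb i).le)
    have h1 : κ i * (a i)⁻¹ * κ i = b i * (mstar i * mstar i) := by
      calc κ i * (a i)⁻¹ * κ i
          = (Real.sqrt (a i * b i) * Real.sqrt (a i * b i))
            * ((a i)⁻¹ * (mstar i * mstar i)) := by simp only [hκ]; ring
        _ = a i * b i * ((a i)⁻¹ * (mstar i * mstar i)) := by rw [hab]
        _ = b i * (mstar i * mstar i) := by
            field_simp [(ha i).ne']
    rw [h1]
    nlinarith [mul_nonneg (mul_nonneg (hb i).le (sub_nonneg.mpr (hm1 i)))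
      (by linarith [hm0 i] : (0:ℝ) ≤ 1 + mstar i)]
  -- part 3: the barycentric matrix
  have hpart3 : Kstarᵀ * Sigma0⁻¹ = U * Matrix.diagonal αstar * Uᵀ := by
    rw [hKstarT, hKstar, hSinv, hmulUD, Matrix.diagonal_mul_diagonal,
      show (fun i => κ i * (a i)⁻¹) = αstar from funext fun i => hκα i]
  refine ⟨hfeasK, ?_, hpart3⟩
  -- part 2: optimality
  intro K hK
  set D : Matrix (Fin d) (Fin d) ℝ := Uᵀ * K * U with hD
  have hKD : U * D * Uᵀ = K := by
    calc U * (Uᵀ * K * U) * Uᵀ = (U * Uᵀ) * K * (U * Uᵀ) := by simp only [Matrix.mul_assoc]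
      _ = K := by rw [hUr, Matrix.one_mul, Matrix.mul_one]
  -- the per-direction feasibility bound
  have hfeasG : (Sigma1 - Kᵀ * Sigma0⁻¹ * K).PosSemidef := (hfeas_iff K).mp hK
  have hGform : Uᵀ * (Sigma1 - Kᵀ * Sigma0⁻¹ * K) * U
      = Matrix.diagonal b - Dᵀ * Matrix.diagonal (fun i => (a i)⁻¹) * D := by
    have hKT : Kᵀ = U * Dᵀ * Uᵀ := by
      rw [← hKD]
      simp [Matrix.transpose_mul, Matrix.mul_assoc]
    rw [hSigma1, hSinv, hKT, ← hKD]
    rw [hmulUD, hmulUD, Matrix.mul_sub, Matrix.sub_mul, hdeconj, hdeconj]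
  have hGpsd : (Matrix.diagonal b - Dᵀ * Matrix.diagonal (fun i => (a i)⁻¹) * D).PosSemidef := by
    rw [← hGform]
    have := hfeasG.conjTranspose_mul_mul_same U
    rwa [Matrix.conjTranspose_eq_transpose_of_trivial] at this
  have hk2 : ∀ i, (D i i) ^ 2 ≤ a i * b i := by
    intro i
    have hd : 0 ≤ (Matrix.diagonal b - Dᵀ * Matrix.diagonal (fun i => (a i)⁻¹) * D) i i := by
      exact hGpsd.diag_nonneg
    have hentry : (Dᵀ * Matrix.diagonal (fun i => (a i)⁻¹) * D) i i
        = ∑ j, D j i * (a j)⁻¹ * D j i := by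
      rw [Matrix.mul_apply]
      apply Finset.sum_congr rfl
      intro j _
      rw [Matrix.mul_diagonal, Matrix.transpose_apply]
    have hsum : D i i * (a i)⁻¹ * D i i ≤ ∑ j, D j i * (a j)⁻¹ * D j i := by
      apply Finset.single_le_sum (f := fun j => D j i * (a j)⁻¹ * D j i)
      · intro j _
        nlinarith [sq_nonneg (D j i), inv_nonneg.mpr (ha j).le]
      · exact Finset.mem_univ i
    rw [Matrix.sub_apply, hentry, Matrix.diagonal_apply_eq] at hd
    nlinarith [mul_inv_cancel₀ (ha i).ne', ha i, hsum]
  -- nuclear norm expression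
  have hM : ∀ E : Matrix (Fin d) (Fin d) ℝ,
      ((U * E * Uᵀ)ᵀ * Sigma0⁻¹ - 1) * h₀.posSemidef.sqrt
        = U * ((Eᵀ * Matrix.diagonal (fun i => (a i)⁻¹) - 1)
            * Matrix.diagonal (fun i => Real.sqrt (a i))) * Uᵀ := by
    intro E
    have hT : (U * E * Uᵀ)ᵀ = U * Eᵀ * Uᵀ := by
      simp [Matrix.transpose_mul, Matrix.mul_assoc]
    rw [hT, hSinv, hsqrt0]
    calc (U * Eᵀ * Uᵀ * (U * Matrix.diagonal (fun i => (a i)⁻¹) * Uᵀ) - 1)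
          * (U * Matrix.diagonal (fun i => Real.sqrt (a i)) * Uᵀ)
        = (U * (Eᵀ * Matrix.diagonal (fun i => (a i)⁻¹)) * Uᵀ)
            * (U * Matrix.diagonal (fun i => Real.sqrt (a i)) * Uᵀ)
          - 1 * (U * Matrix.diagonal (fun i => Real.sqrt (a i)) * Uᵀ) := by
          rw [hmulUD, Matrix.sub_mul]
      _ = U * (Eᵀ * Matrix.diagonal (fun i => (a i)⁻¹)
            * Matrix.diagonal (fun i => Real.sqrt (a i))) * Uᵀ
          - U * Matrix.diagonal (fun i => Real.sqrt (a i)) * Uᵀ := by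
          rw [hmulUD, Matrix.one_mul]
      _ = U * ((Eᵀ * Matrix.diagonal (fun i => (a i)⁻¹) - 1)
            * Matrix.diagonal (fun i => Real.sqrt (a i))) * Uᵀ := by
          rw [Matrix.sub_mul, Matrix.one_mul, Matrix.mul_sub, Matrix.sub_mul]
  -- the nuclear norm lower bound for K
  have hNi : ∀ i, ((Dᵀ * Matrix.diagonal (fun i => (a i)⁻¹) - 1)
      * Matrix.diagonal (fun i => Real.sqrt (a i))) i i
      = (D i i * (a i)⁻¹ - 1) * Real.sqrt (a i) := by
    intro i
    rw [Matrix.mul_diagonal, Matrix.sub_apply, Matrix.mul_diagonal, Matrix.transpose_apply,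
      Matrix.one_apply_eq]
  have hnnK : ∑ i, |(D i i * (a i)⁻¹ - 1) * Real.sqrt (a i)|
      ≤ nuclearNorm ((Kᵀ * Sigma0⁻¹ - 1) * h₀.posSemidef.sqrt) := by
    rw [← hKD, hM, hnnconj]
    calc ∑ i, |(D i i * (a i)⁻¹ - 1) * Real.sqrt (a i)|
        = ∑ i, |((Dᵀ * Matrix.diagonal (fun i => (a i)⁻¹) - 1)
            * Matrix.diagonal (fun i => Real.sqrt (a i))) i i| := by
          apply Finset.sum_congr rfl; intro i _; rw [hNi]
      _ ≤ _ := aux_sum_abs_diag_le_nuclearNorm _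
  -- nuclear norm value at Kstar
  have hNstar : (Matrix.diagonal κ)ᵀ * Matrix.diagonal (fun i => (a i)⁻¹) - 1
      = Matrix.diagonal (fun i => κ i * (a i)⁻¹ - 1) := by
    rw [Matrix.diagonal_transpose, Matrix.diagonal_mul_diagonal, ← Matrix.diagonal_one,
      Matrix.diagonal_sub]
  have hnnKstar : nuclearNorm ((Kstarᵀ * Sigma0⁻¹ - 1) * h₀.posSemidef.sqrt)
      = ∑ i, |(κ i * (a i)⁻¹ - 1) * Real.sqrt (a i)| := by
    rw [hKstar, hM, hnnconj, hNstar, Matrix.diagonal_mul_diagonal, aux_nuclearNorm_diagonal]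
  -- traces
  have htr0 : Sigma0.trace = ∑ i, a i := by rw [hSigma0, htrconj]
  have htr1 : Sigma1.trace = ∑ i, b i := by rw [hSigma1, htrconj]
  have htrK : K.trace = ∑ i, D i i := by
    rw [← hKD, Matrix.trace_mul_cycle, hUl, Matrix.one_mul, Matrix.trace]
    rfl
  have htrKstar : Kstar.trace = ∑ i, κ i := by rw [hKstar, htrconj]
  -- per-coordinate comparison
  have hper : ∀ i, -2 * κ i + lam * |(κ i * (a i)⁻¹ - 1) * Real.sqrt (a i)|
      ≤ -2 * D i i + lam * |(D i i * (a i)⁻¹ - 1) * Real.sqrt (a i)| := by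
    intro i
    have hsa0 : 0 < Real.sqrt (a i) := Real.sqrt_pos.mpr (ha i)
    have hform : ∀ k : ℝ, (k * (a i)⁻¹ - 1) * Real.sqrt (a i)
        = k / Real.sqrt (a i) - Real.sqrt (a i) := by
      intro k
      rw [eq_sub_iff_add_eq, sub_mul, one_mul, sub_add_cancel, eq_div_iff hsa0.ne']
      calc k * (a i)⁻¹ * Real.sqrt (a i) * Real.sqrt (a i)
          = k * ((a i)⁻¹ * (Real.sqrt (a i) * Real.sqrt (a i))) := by ring
        _ = k := by rw [hsaa i, inv_mul_cancel₀ (ha i).ne', mul_one]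
    have hlhs : -2 * κ i + lam * |(κ i * (a i)⁻¹ - 1) * Real.sqrt (a i)|
        = (if b i ≤ a i ∨ lam < 2 * Real.sqrt (a i)
            then -2 * (Real.sqrt (a i) * Real.sqrt (b i)) + lam * |Real.sqrt (b i) - Real.sqrt (a i)|
            else -2 * a i) := by
      by_cases hcase : b i ≤ a i ∨ lam < 2 * Real.sqrt (a i)
      · rw [if_pos hcase]
        have hm : mstar i = 1 := by rw [hmstar, if_pos hcase]
        have hκi : κ i = Real.sqrt (a i) * Real.sqrt (b i) := by
          rw [hκval' i, hm, mul_one]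
        have hc : (κ i * (a i)⁻¹ - 1) * Real.sqrt (a i)
            = Real.sqrt (b i) - Real.sqrt (a i) := by
          rw [hκα i, hαstar i, if_pos hcase, Real.sqrt_div (hb i).le, sub_mul,
            div_mul_cancel₀ _ hsa0.ne', one_mul]
        rw [hc, hκi]
      · rw [if_neg hcase]
        have hκi : κ i = a i := hκval i hcase
        have hc : (κ i * (a i)⁻¹ - 1) * Real.sqrt (a i) = 0 := by
          rw [hκi, mul_inv_cancel₀ (ha i).ne', sub_self, zero_mul]
        rw [hc, hκi, abs_zero, mul_zero, add_zero]
    rw [hlhs, hform]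
    exact aux_scalar_key (ha i) (hb i) hlam0 (hlam i) (hk2 i)
  -- assemble
  rw [hF Kstar, hF K, htr0, htr1, htrK, htrKstar, hnnKstar]
  have h2 : -2 * (∑ i, κ i) + lam * ∑ i, |(κ i * (a i)⁻¹ - 1) * Real.sqrt (a i)|
      ≤ -2 * (∑ i, D i i) + lam * ∑ i, |(D i i * (a i)⁻¹ - 1) * Real.sqrt (a i)| := by
    have hsum := Finset.sum_le_sum (fun i (_ : i ∈ Finset.univ) => hper i)
    rw [Finset.sum_add_distrib, Finset.sum_add_distrib, ← Finset.mul_sum, ← Finset.mul_sum,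
      ← Finset.mul_sum, ← Finset.mul_sum] at hsum
    exact hsum
  have h3 := mul_le_mul_of_nonneg_left hnnK hlam0
  linarith [h2, h3]
end

section
/- Let p, q ≥ 1 be real numbers and let A ∈ ℝ^{k×l} be a nonzero matrix with compact singular value decomposition A = ∑_{r=1}^{ρ} σ_r u_r v_rᵀ, where σ_1,…,σ_ρ > 0 are the nonzero singular values and {u_r}, {v_r} are orthonormal families. Define G := q‖A‖_{S_p}^{q−p} ∑_{r=1}^{ρ} σ_r^{p−1} u_r v_rᵀ. Then G is a subgradient of the convex function B ↦ ‖B‖_{S_p}^{q} at A; that is, for every B ∈ ℝ^{k×l}, ‖B‖_{S_p}^{q} ≥ ‖A‖_{S_p}^{q} + ⟨G, B − A⟩. -/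
open Matrix BigOperators Polynomial

/-- The Schatten-`p` norm of a real matrix: the `ℓ_p` norm of the vector of its singular
values, realized as the square roots of the eigenvalues of `Mᴴ * M`. -/
noncomputable def schattenNorm {k l : Type*} [Fintype k] [Fintype l] [DecidableEq l]
    (p : ℝ) (M : Matrix k l ℝ) : ℝ :=
  (∑ j, Real.sqrt ((Matrix.isHermitian_conjTranspose_mul_self M).eigenvalues j) ^ p) ^ (1 / p)

/-- The Frobenius inner product of two real matrices. -/
def frobInner {m n : Type*} [Fintype m] [Fintype n] (A B : Matrix m n ℝ) : ℝ :=
  ∑ i, ∑ j, A i j * B i j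


lemma euclid_inner_eq {n : ℕ} (x y : EuclideanSpace ℝ (Fin n)) :
    inner ℝ x y = ∑ i, x i * y i := by
  simp [PiLp.inner_apply, RCLike.inner_apply, mul_comm]

lemma charpoly_of_eigenbasis {l : ℕ} (M : Matrix (Fin l) (Fin l) ℝ)
    (b : OrthonormalBasis (Fin l) ℝ (EuclideanSpace ℝ (Fin l))) (d : Fin l → ℝ)
    (hb : ∀ j, M *ᵥ ⇑(b j) = d j • ⇑(b j)) :
    M.charpoly = ∏ i, (X - C (d i)) := by
  classical
  set W : Matrix (Fin l) (Fin l) ℝ := Matrix.of (fun i j => b j i) with hW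
  have hWtW : Wᵀ * W = 1 := by
    ext i j
    have := (orthonormal_iff_ite.mp b.orthonormal) i j
    rw [euclid_inner_eq] at this
    simp only [Matrix.mul_apply, Matrix.transpose_apply, hW, Matrix.of_apply, Matrix.one_apply]
    simpa using this
  have hWWt : W * Wᵀ = 1 := mul_eq_one_comm.mp hWtW
  have hMW : M * W = W * Matrix.diagonal d := by
    ext i j
    rw [Matrix.mul_diagonal]
    simp only [Matrix.mul_apply, hW, Matrix.of_apply]
    have h1 := congrFun (hb j) i
    simp only [Matrix.mulVec, dotProduct, Pi.smul_apply, smul_eq_mul] at h1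
    rw [h1, mul_comm]
  have hM : M = W * Matrix.diagonal d * Wᵀ := by
    calc M = M * (W * Wᵀ) := by rw [hWWt, Matrix.mul_one]
    _ = (M * W) * Wᵀ := by rw [Matrix.mul_assoc]
    _ = W * Matrix.diagonal d * Wᵀ := by rw [hMW]
  -- charpoly computation
  have hdet : M.charpoly = (Matrix.diagonal d).charpoly := by
    have hmapmul : ∀ (P Q : Matrix (Fin l) (Fin l) ℝ),
        (P * Q).map (C : ℝ →+* ℝ[X]) = P.map C * Q.map C := fun P Q => Matrix.map_mul
    have hcm : charmatrix M = W.map C * charmatrix (Matrix.diagonal d) * Wᵀ.map C := by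
      rw [charmatrix, charmatrix]
      have hscal : W.map (C : ℝ →+* ℝ[X]) * Matrix.scalar (Fin l) (X : ℝ[X]) * Wᵀ.map C
          = Matrix.scalar (Fin l) (X : ℝ[X]) := by
        rw [(Matrix.scalar_commute (X : ℝ[X]) (fun r' => Commute.all _ _) (W.map C)).symm.eq,
          Matrix.mul_assoc, ← hmapmul, hWWt]
        simp
      rw [Matrix.mul_sub, Matrix.sub_mul, hscal]
      congr 1
      rw [RingHom.mapMatrix_apply, RingHom.mapMatrix_apply, hM, hmapmul, hmapmul]
    rw [Matrix.charpoly, Matrix.charpoly, hcm, Matrix.det_mul, Matrix.det_mul]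
    ring_nf
    rw [mul_comm, ← mul_assoc, mul_comm (Wᵀ.map C).det, ← Matrix.det_mul, ← hmapmul, hWWt]
    simp
  rw [hdet, Matrix.charpoly]
  have : charmatrix (Matrix.diagonal d) = Matrix.diagonal (fun i => (X : ℝ[X]) - C (d i)) := by
    ext i j
    by_cases h : i = j
    · subst h; simp
    · simp [h, Matrix.diagonal_apply_ne _ h]
  rw [this, Matrix.det_diagonal]

lemma sum_f_eigenvalues {l ρ : ℕ} (f : ℝ → ℝ) (hf0 : f 0 = 0)
    (M : Matrix (Fin l) (Fin l) ℝ) (hM : M.IsHermitian)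
    (μ : Fin ρ → ℝ) (v : Fin ρ → EuclideanSpace ℝ (Fin l)) (hv : Orthonormal ℝ v)
    (hMdef : M = ∑ r, μ r • Matrix.vecMulVec (fun i => v r i) (fun j => v r j)) :
    ∑ j, f (hM.eigenvalues j) = ∑ r, f (μ r) := by
  classical
  have hρl : ρ ≤ l := by
    have := hv.linearIndependent.fintype_card_le_finrank
    simpa using this
  set e : Fin ρ → Fin l := fun r => ⟨(r : ℕ), lt_of_lt_of_le r.2 hρl⟩ with he
  have he_inj : Function.Injective e := by
    intro a b hab
    apply Fin.ext
    have h2 : ((e a : Fin l) : ℕ) = ((e b : Fin l) : ℕ) := congrArg Fin.val hab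
    exact h2
  set s : Set (Fin l) := {i | (i : ℕ) < ρ} with hs
  set w : Fin l → EuclideanSpace ℝ (Fin l) :=
    fun i => if h : (i : ℕ) < ρ then v ⟨(i : ℕ), h⟩ else 0 with hwdef
  have hw : Orthonormal ℝ (s.restrict w) := by
    rw [orthonormal_iff_ite]
    rintro ⟨i, hi⟩ ⟨j, hj⟩
    have hi' : (i : ℕ) < ρ := hi
    have hj' : (j : ℕ) < ρ := hj
    have h0 := (orthonormal_iff_ite.mp hv) ⟨(i : ℕ), hi'⟩ ⟨(j : ℕ), hj'⟩
    show inner ℝ (w i) (w j) = if (⟨i, hi⟩ : s) = ⟨j, hj⟩ then 1 else 0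
    simp only [Set.restrict_apply, hwdef, dif_pos hi', dif_pos hj']
    rw [h0]
    congr 1
    simp only [Fin.mk.injEq, Subtype.mk.injEq, eq_iff_iff]
    exact Fin.val_inj
  obtain ⟨b, hb⟩ := hw.exists_orthonormalBasis_extension_of_card_eq (by simp)
  set d : Fin l → ℝ := fun i => if h : (i : ℕ) < ρ then μ ⟨(i : ℕ), h⟩ else 0 with hd
  have hvb : ∀ r : Fin ρ, b (e r) = v r := by
    intro r
    have hmem : e r ∈ s := r.2
    rw [hb _ hmem]
    simp only [hwdef, he]
    rw [dif_pos r.2]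
  have hkey : ∀ i, M *ᵥ ⇑(b i) = d i • ⇑(b i) := by
    intro i
    funext t
    have hinner : ∀ r : Fin ρ, ∑ x, v r x * b i x = if e r = i then 1 else 0 := by
      intro r
      have h0 := (orthonormal_iff_ite.mp b.orthonormal) (e r) i
      rw [euclid_inner_eq] at h0
      rw [← h0]
      congr 1
      funext x
      rw [hvb r]
    have hMapp : ∀ t x, M t x = ∑ r, μ r * (v r t * v r x) := by
      intro t x
      rw [hMdef]
      simp [Matrix.sum_apply, Matrix.vecMulVec_apply, mul_assoc]
    simp only [Matrix.mulVec, dotProduct, Pi.smul_apply, smul_eq_mul]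
    calc ∑ x, M t x * b i x 
        = ∑ x, ∑ r, μ r * (v r t * v r x) * b i x := by
          refine Finset.sum_congr rfl fun x _ => ?_
          rw [hMapp t x, Finset.sum_mul]
      _ = ∑ r, μ r * v r t * ∑ x, v r x * b i x := by
          rw [Finset.sum_comm]
          refine Finset.sum_congr rfl fun r _ => ?_
          rw [Finset.mul_sum]
          refine Finset.sum_congr rfl fun x _ => by ring
      _ = ∑ r, (if e r = i then μ r * v r t else 0) := by
          refine Finset.sum_congr rfl fun r _ => ?_
          rw [hinner r]
          split <;> simp
      _ = d i * b i t := by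
          by_cases h : (i : ℕ) < ρ
          · rw [Finset.sum_eq_single ⟨(i : ℕ), h⟩]
            · have : e ⟨(i : ℕ), h⟩ = i := Fin.ext rfl
              rw [if_pos this]
              simp only [hd, dif_pos h]
              have hbi : b i = v ⟨(i : ℕ), h⟩ :=
                (congrArg b (Fin.ext rfl : i = e ⟨(i : ℕ), h⟩)).trans (hvb _)
              rw [hbi]
            · intro r _ hr
              rw [if_neg]
              intro hcon
              exact hr (he_inj (hcon.trans (Fin.ext rfl).symm))
            · simp
          · rw [Finset.sum_eq_zero, hd]
            · simp [dif_neg h]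
            · intro r _
              rw [if_neg]
              intro hcon
              exact h (by rw [← hcon]; exact r.2)
    done
  have h1 := charpoly_of_eigenbasis M b d hkey
  have h2 := charpoly_of_eigenbasis M hM.eigenvectorBasis hM.eigenvalues
    (fun j => by simpa using hM.mulVec_eigenvectorBasis j)
  have hprod : ∏ i, (X - C (d i)) = ∏ j, (X - C (hM.eigenvalues j)) := h1 ▸ h2
  have hms : Multiset.map d Finset.univ.val = Multiset.map hM.eigenvalues Finset.univ.val := by
    have hroots := congrArg Polynomial.roots hprod
    rwa [Finset.prod_eq_multiset_prod, Finset.prod_eq_multiset_prod,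
      show (Multiset.map (fun i => X - C (d i)) Finset.univ.val)
        = Multiset.map (fun a => X - C a) (Multiset.map d Finset.univ.val) by
          rw [Multiset.map_map]; rfl,
      show (Multiset.map (fun i => X - C (hM.eigenvalues i)) Finset.univ.val)
        = Multiset.map (fun a => X - C a) (Multiset.map hM.eigenvalues Finset.univ.val) by
          rw [Multiset.map_map]; rfl,
      Polynomial.roots_multiset_prod_X_sub_C, Polynomial.roots_multiset_prod_X_sub_C] at hroots
  have hsum : ∑ j, f (hM.eigenvalues j) = ∑ i, f (d i) := by
    calc ∑ j, f (hM.eigenvalues j)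
        = ((Finset.univ.val.map hM.eigenvalues).map f).sum := by rw [Multiset.map_map]; rfl
      _ = ((Finset.univ.val.map d).map f).sum := by rw [hms]
      _ = ∑ i, f (d i) := by rw [Multiset.map_map]; rfl
  rw [hsum]
  have : ∀ i : Fin l, f (d i) = ∑ r : Fin ρ, if e r = i then f (μ r) else 0 := by
    intro i
    by_cases h : (i : ℕ) < ρ
    · rw [Finset.sum_eq_single ⟨(i : ℕ), h⟩]
      · rw [if_pos (Fin.ext rfl : e ⟨(i : ℕ), h⟩ = i), hd]
        simp [dif_pos h]
      · intro r _ hr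
        rw [if_neg]
        intro hcon
        exact hr (he_inj (hcon.trans (Fin.ext rfl).symm))
      · simp
    · rw [Finset.sum_eq_zero, hd]
      · simp [dif_neg h, hf0]
      · intro r _
        rw [if_neg]
        intro hcon
        exact h (by rw [← hcon]; exact r.2)
  rw [Finset.sum_congr rfl fun i _ => this i, Finset.sum_comm]
  refine Finset.sum_congr rfl fun r _ => ?_
  simp

lemma bessel_sums {n m : ℕ} (w : Fin n → Fin m → ℝ)
    (horth : ∀ i j, i ≠ j → ∑ t, w i t * w j t = 0)
    (hnorm : ∀ i, ∑ t, w i t * w i t ≤ 1)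
    (z : Fin m → ℝ) :
    ∑ i, (∑ t, w i t * z t) ^ 2 ≤ ∑ t, z t * z t := by
  classical
  set c : Fin n → ℝ := fun i => ∑ t, w i t * z t with hc
  have key : (0:ℝ) ≤ ∑ t, (z t - ∑ i, c i * w i t) ^ 2 :=
    Finset.sum_nonneg fun t _ => sq_nonneg _
  have hB : ∑ t, z t * ∑ i, c i * w i t = ∑ i, c i ^ 2 := by
    calc ∑ t, z t * ∑ i, c i * w i t = ∑ t, ∑ i, c i * (w i t * z t) := by
          refine Finset.sum_congr rfl fun t _ => ?_
          rw [Finset.mul_sum]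
          exact Finset.sum_congr rfl fun i _ => by ring
      _ = ∑ i, ∑ t, c i * (w i t * z t) := Finset.sum_comm
      _ = ∑ i, c i ^ 2 := by
          refine Finset.sum_congr rfl fun i _ => ?_
          rw [← Finset.mul_sum, show (∑ t, w i t * z t) = c i from rfl, sq]
  have hC : ∑ t, (∑ i, c i * w i t) * (∑ j, c j * w j t)
      = ∑ i, ∑ j, (c i * c j) * ∑ t, w i t * w j t := by
    calc ∑ t, (∑ i, c i * w i t) * (∑ j, c j * w j t)
        = ∑ t, ∑ i, ∑ j, (c i * c j) * (w i t * w j t) := by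
          refine Finset.sum_congr rfl fun t _ => ?_
          rw [Finset.sum_mul_sum]
          exact Finset.sum_congr rfl fun i _ => Finset.sum_congr rfl fun j _ => by ring
      _ = ∑ i, ∑ t, ∑ j, (c i * c j) * (w i t * w j t) := Finset.sum_comm
      _ = ∑ i, ∑ j, (c i * c j) * ∑ t, w i t * w j t := by
          refine Finset.sum_congr rfl fun i _ => ?_
          rw [Finset.sum_comm]
          exact Finset.sum_congr rfl fun j _ => (Finset.mul_sum _ _ _).symm
  have hCle : ∑ i, ∑ j, (c i * c j) * ∑ t, w i t * w j t ≤ ∑ i, c i ^ 2 := by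
    refine Finset.sum_le_sum fun i _ => ?_
    rw [Finset.sum_eq_single i]
    · calc (c i * c i) * ∑ t, w i t * w i t ≤ (c i * c i) * 1 := by
            apply mul_le_mul_of_nonneg_left (hnorm i) (mul_self_nonneg _)
        _ = c i ^ 2 := by ring
    · intro j _ hj
      rw [horth i j (fun h => hj h.symm), mul_zero]
    · simp
  have expand : ∑ t, (z t - ∑ i, c i * w i t) ^ 2
      = ∑ t, z t * z t - 2 * (∑ i, c i ^ 2)
        + ∑ i, ∑ j, (c i * c j) * ∑ t, w i t * w j t := by
    calc ∑ t, (z t - ∑ i, c i * w i t) ^ 2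
        = ∑ t, (z t * z t - 2 * (z t * ∑ i, c i * w i t)
            + (∑ i, c i * w i t) * (∑ j, c j * w j t)) :=
          Finset.sum_congr rfl fun t _ => by ring
      _ = ∑ t, z t * z t - 2 * (∑ t, z t * ∑ i, c i * w i t)
            + ∑ t, (∑ i, c i * w i t) * (∑ j, c j * w j t) := by
          rw [Finset.sum_add_distrib, Finset.sum_sub_distrib, Finset.mul_sum]
      _ = _ := by rw [hB, hC]
  rw [expand] at key
  have final : ∑ i, c i ^ 2 ≤ ∑ t, z t * z t := by linarith
  simpa only [hc] using final

lemma euclid_expand {n : ℕ} (b : OrthonormalBasis (Fin n) ℝ (EuclideanSpace ℝ (Fin n)))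
    (z : EuclideanSpace ℝ (Fin n)) (t : Fin n) :
    z t = ∑ j, (∑ t', b j t' * z t') * b j t := by
  have h := b.sum_repr' z
  have h2 := congrFun (congrArg (fun (w : EuclideanSpace ℝ (Fin n)) => (w : Fin n → ℝ)) h) t
  simp only [PiLp.inner_apply, RCLike.inner_apply, starRingEnd_apply, star_trivial] at h2
  rw [← h2, WithLp.ofLp_sum, Finset.sum_apply t Finset.univ _]
  exact Finset.sum_congr rfl fun j _ => by
    simp [PiLp.smul_apply]
    exact Or.inl (Finset.sum_congr rfl fun _ _ => mul_comm _ _)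

lemma trace_bound {k l ρ : ℕ} (p : ℝ) (hp : 1 ≤ p)
    (σ : Fin ρ → ℝ) (hσ : ∀ r, 0 < σ r) (hT : 0 < ∑ r, σ r ^ p)
    (u : Fin ρ → EuclideanSpace ℝ (Fin k)) (v : Fin ρ → EuclideanSpace ℝ (Fin l))
    (hu : Orthonormal ℝ u) (hv : Orthonormal ℝ v)
    (B : Matrix (Fin k) (Fin l) ℝ) :
    ∑ r, σ r ^ (p - 1) * (∑ i, ∑ j, u r i * B i j * v r j)
      ≤ (∑ r, σ r ^ p) ^ ((p - 1) / p) * schattenNorm p B := by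
  classical
  have hp0 : (0:ℝ) < p := lt_of_lt_of_le one_pos hp
  set hBH := Matrix.isHermitian_conjTranspose_mul_self B with hBHdef
  set eig : Fin l → ℝ := hBH.eigenvalues with heigdef
  have heig : ∀ j, 0 ≤ eig j := fun j => Matrix.eigenvalues_conjTranspose_mul_self_nonneg B j
  set s : Fin l → ℝ := fun j => Real.sqrt (eig j) with hsdef
  have hs : ∀ j, 0 ≤ s j := fun j => Real.sqrt_nonneg _
  set y := hBH.eigenvectorBasis with hydef
  -- dot product of images
  have hdot : ∀ x z : Fin l → ℝ, ∑ t, (B *ᵥ x) t * (B *ᵥ z) t = ∑ a, x a * ((Bᴴ * B) *ᵥ z) a := by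
    intro x z
    simp only [Matrix.mulVec, dotProduct, Matrix.mul_apply, Matrix.conjTranspose_apply,
      star_trivial]
    calc ∑ t, (∑ a, B t a * x a) * (∑ b, B t b * z b)
        = ∑ t, ∑ a, ∑ b, x a * (B t a * B t b * z b) := by
          refine Finset.sum_congr rfl fun t _ => ?_
          rw [Finset.sum_mul_sum]
          exact Finset.sum_congr rfl fun a _ => Finset.sum_congr rfl fun b _ => by ring
      _ = ∑ a, ∑ t, ∑ b, x a * (B t a * B t b * z b) := Finset.sum_comm
      _ = ∑ a, x a * ∑ b, (∑ t, B t a * B t b) * z b := by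
          refine Finset.sum_congr rfl fun a _ => ?_
          rw [Finset.sum_comm, Finset.mul_sum]
          refine Finset.sum_congr rfl fun b _ => ?_
          rw [Finset.sum_mul, Finset.mul_sum]
          try exact Finset.sum_congr rfl fun t _ => by ring
  have hyy : ∀ j, (Bᴴ * B) *ᵥ ⇑(y j) = eig j • ⇑(y j) := fun j => hBH.mulVec_eigenvectorBasis j
  have hBy : ∀ i j, ∑ t, (B *ᵥ ⇑(y i)) t * (B *ᵥ ⇑(y j)) t = if i = j then eig j else 0 := by
    intro i j
    rw [hdot, hyy j]
    have h0 := (orthonormal_iff_ite.mp y.orthonormal) i j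
    rw [euclid_inner_eq] at h0
    calc ∑ a, (y i) a * (eig j • ⇑(y j)) a = eig j * ∑ a, (y i) a * (y j) a := by
          rw [Finset.mul_sum]
          exact Finset.sum_congr rfl fun a _ => by
            simp only [Pi.smul_apply, smul_eq_mul]; try ring
      _ = if i = j then eig j else 0 := by rw [h0]; split <;> simp
  -- the left singular vectors
  set x : Fin l → Fin k → ℝ :=
    fun j => if eig j = 0 then 0 else (s j)⁻¹ • (B *ᵥ ⇑(y j)) with hxdef
  have hBy0 : ∀ j, eig j = 0 → B *ᵥ ⇑(y j) = 0 := by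
    intro j hj
    have h0 := hBy j j
    rw [if_pos rfl, hj] at h0
    funext t
    have hnn : ∀ t, 0 ≤ (B *ᵥ ⇑(y j)) t * (B *ᵥ ⇑(y j)) t := fun t => mul_self_nonneg _
    have := (Finset.sum_eq_zero_iff_of_nonneg (fun t _ => hnn t)).mp h0 t (Finset.mem_univ t)
    exact mul_self_eq_zero.mp this
  have hsne : ∀ j, eig j ≠ 0 → s j ≠ 0 := by
    intro j hj
    have hpos : 0 < eig j := lt_of_le_of_ne (heig j) (Ne.symm hj)
    simp only [hsdef]
    exact ne_of_gt (Real.sqrt_pos.mpr hpos)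
  have hBy2 : ∀ j, B *ᵥ ⇑(y j) = fun t => s j * x j t := by
    intro j
    by_cases hj : eig j = 0
    · rw [hBy0 j hj]
      funext t
      simp [hxdef, if_pos hj]
    · funext t
      simp only [hxdef, if_neg hj, Pi.smul_apply, smul_eq_mul]
      rw [← mul_assoc, mul_inv_cancel₀ (hsne j hj), one_mul]
  have hxx : ∀ i j, ∑ t, x i t * x j t = if i = j then (if eig j = 0 then 0 else 1) else 0 := by
    intro i j
    by_cases hi : eig i = 0
    · simp only [hxdef, if_pos hi]
      by_cases hij : i = j
      · subst hij; simp [if_pos hi]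
      · simp [hij]
    · by_cases hj : eig j = 0
      · simp only [hxdef, if_neg hi, if_pos hj]
        have hij : i ≠ j := fun h => hi (h ▸ hj)
        simp [hij]
      · simp only [hxdef, if_neg hi, if_neg hj]
        have : ∑ t, ((s i)⁻¹ • (B *ᵥ ⇑(y i))) t * ((s j)⁻¹ • (B *ᵥ ⇑(y j))) t
            = (s i)⁻¹ * (s j)⁻¹ * ∑ t, (B *ᵥ ⇑(y i)) t * (B *ᵥ ⇑(y j)) t := by
          rw [Finset.mul_sum]
          exact Finset.sum_congr rfl fun t _ => by
            simp only [Pi.smul_apply, smul_eq_mul]; ring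
        rw [this, hBy i j]
        by_cases hij : i = j
        · subst hij
          have hss : s i * s i = eig i := Real.mul_self_sqrt (heig i)
          have hsi : s i ≠ 0 := hsne i hi
          simp only [if_pos (rfl : i = i), if_neg hi]
          rw [← hss]
          field_simp
          simp
        · simp [hij]
  -- coefficient matrices
  set a : Fin ρ → Fin l → ℝ := fun r j => ∑ t, u r t * x j t with hadef
  set b : Fin ρ → Fin l → ℝ := fun r j => ∑ t, y j t * v r t with hbdef
  have huu : ∀ r r', ∑ t, u r t * u r' t = if r = r' then 1 else 0 := by
    intro r r'
    have h0 := (orthonormal_iff_ite.mp hu) r r'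
    rw [euclid_inner_eq] at h0
    exact h0
  have hvv : ∀ r r', ∑ t, v r t * v r' t = if r = r' then 1 else 0 := by
    intro r r'
    have h0 := (orthonormal_iff_ite.mp hv) r r'
    rw [euclid_inner_eq] at h0
    exact h0
  have hyyo : ∀ i j, ∑ t, y i t * y j t = if i = j then 1 else 0 := by
    intro i j
    have h0 := (orthonormal_iff_ite.mp y.orthonormal) i j
    rw [euclid_inner_eq] at h0
    exact h0
  -- Bessel bounds
  have hA1 : ∀ j, ∑ r, (a r j) ^ 2 ≤ 1 := by
    intro j
    have := bessel_sums (fun r t => u r t)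
      (fun r r' hne => by rw [huu r r']; simp [hne]) (fun r => le_of_eq (by rw [huu r r]; simp))
      (x j)
    refine le_trans this ?_
    have := hxx j j
    rw [if_pos rfl] at this
    rw [this]
    split <;> norm_num
  have hA2 : ∀ r, ∑ j, (a r j) ^ 2 ≤ 1 := by
    intro r
    have hb1 := bessel_sums (fun j t => x j t)
      (fun i j hne => by rw [hxx i j]; simp [hne])
      (fun i => by rw [hxx i i]; rw [if_pos rfl]; split <;> norm_num)
      (fun t => u r t)
    calc ∑ j, (a r j) ^ 2 = ∑ j, (∑ t, x j t * u r t) ^ 2 := by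
          refine Finset.sum_congr rfl fun j _ => ?_
          rw [hadef]
          congr 1
          exact Finset.sum_congr rfl fun t _ => by ring
      _ ≤ ∑ t, u r t * u r t := hb1
      _ = 1 := by rw [huu r r]; simp
  have hB1 : ∀ j, ∑ r, (b r j) ^ 2 ≤ 1 := by
    intro j
    have hb1 := bessel_sums (fun r t => v r t)
      (fun r r' hne => by rw [hvv r r']; simp [hne]) (fun r => le_of_eq (by rw [hvv r r]; simp))
      (fun t => y j t)
    calc ∑ r, (b r j) ^ 2 = ∑ r, (∑ t, v r t * y j t) ^ 2 := by
          refine Finset.sum_congr rfl fun r _ => ?_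
          rw [hbdef]
          congr 1
          exact Finset.sum_congr rfl fun t _ => by ring
      _ ≤ ∑ t, y j t * y j t := hb1
      _ = 1 := by rw [hyyo j j]; simp
  have hB2 : ∀ r, ∑ j, (b r j) ^ 2 ≤ 1 := by
    intro r
    have hb1 := bessel_sums (fun j t => y j t)
      (fun i j hne => by rw [hyyo i j]; simp [hne]) (fun i => le_of_eq (by rw [hyyo i i]; simp))
      (fun t => v r t)
    calc ∑ j, (b r j) ^ 2 = ∑ j, (∑ t, y j t * v r t) ^ 2 := by
          exact Finset.sum_congr rfl fun j _ => rfl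
      _ ≤ ∑ t, v r t * v r t := hb1
      _ = 1 := by rw [hvv r r]; simp
  -- diagonal expansion
  have hd : ∀ r, ∑ i, ∑ j, u r i * B i j * v r j = ∑ j, s j * (a r j * b r j) := by
    intro r
    calc ∑ i, ∑ j, u r i * B i j * v r j = ∑ i, u r i * (B *ᵥ ⇑(v r)) i := by
          refine Finset.sum_congr rfl fun i _ => ?_
          rw [Matrix.mulVec, dotProduct, Finset.mul_sum]
          exact Finset.sum_congr rfl fun j _ => by
            ring
      _ = ∑ i, u r i * ∑ j, b r j * (B *ᵥ ⇑(y j)) i := by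
          refine Finset.sum_congr rfl fun i _ => ?_
          congr 1
          calc (B *ᵥ ⇑(v r)) i = ∑ t, B i t * (v r) t := rfl
            _ = ∑ t, B i t * ∑ j, (∑ t', y j t' * v r t') * y j t := by
                exact Finset.sum_congr rfl fun t _ => by rw [← euclid_expand y (v r) t]
            _ = ∑ t, ∑ j, b r j * (B i t * y j t) := by
                refine Finset.sum_congr rfl fun t _ => ?_
                rw [Finset.mul_sum]
                exact Finset.sum_congr rfl fun j _ => by rw [hbdef]; ring
            _ = ∑ j, b r j * (B *ᵥ ⇑(y j)) i := by
                rw [Finset.sum_comm]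
                refine Finset.sum_congr rfl fun j _ => ?_
                rw [show ((B *ᵥ ⇑(y j)) i) = ∑ t, B i t * (y j) t from rfl, Finset.mul_sum]
      _ = ∑ i, ∑ j, u r i * (b r j * (s j * x j i)) := by
          refine Finset.sum_congr rfl fun i _ => ?_
          rw [Finset.mul_sum]
          refine Finset.sum_congr rfl fun j _ => ?_
          rw [hBy2 j]
      _ = ∑ j, s j * (a r j * b r j) := by
          rw [Finset.sum_comm]
          refine Finset.sum_congr rfl fun j _ => ?_
          simp only [hadef]
          rw [Finset.sum_mul, Finset.mul_sum]
          exact Finset.sum_congr rfl fun i _ => by ring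
  -- the doubly substochastic weights
  set m : Fin ρ → Fin l → ℝ := fun r j => ((a r j) ^ 2 + (b r j) ^ 2) / 2 with hmdef
  have hm0 : ∀ r j, 0 ≤ m r j := fun r j => by positivity
  have hmrow : ∀ r, ∑ j, m r j ≤ 1 := by
    intro r
    have := hA2 r
    have := hB2 r
    simp only [hmdef]
    rw [show (∑ j, ((a r j) ^ 2 + (b r j) ^ 2) / 2)
      = ((∑ j, (a r j) ^ 2) + ∑ j, (b r j) ^ 2) / 2 from by
        rw [← Finset.sum_add_distrib, ← Finset.sum_div]]
    linarith
  have hmcol : ∀ j, ∑ r, m r j ≤ 1 := by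
    intro j
    have := hA1 j
    have := hB1 j
    simp only [hmdef]
    rw [show (∑ r, ((a r j) ^ 2 + (b r j) ^ 2) / 2)
      = ((∑ r, (a r j) ^ 2) + ∑ r, (b r j) ^ 2) / 2 from by
        rw [← Finset.sum_add_distrib, ← Finset.sum_div]]
    linarith
  -- first bound
  have step1 : ∑ r, σ r ^ (p - 1) * (∑ i, ∑ j, u r i * B i j * v r j)
      ≤ ∑ r, ∑ j, (σ r ^ (p - 1) * s j) * m r j := by
    refine Finset.sum_le_sum fun r _ => ?_
    rw [hd r, Finset.mul_sum]
    refine Finset.sum_le_sum fun j _ => ?_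
    have hc : (0:ℝ) ≤ σ r ^ (p - 1) := Real.rpow_nonneg (le_of_lt (hσ r)) _
    have hsj := hs j
    simp only [hmdef]
    nlinarith [mul_nonneg (mul_nonneg hc hsj) (sq_nonneg (a r j - b r j))]
  set T : ℝ := ∑ r, σ r ^ p with hTdef
  set S : ℝ := ∑ j, s j ^ p with hSdef
  have hsch : schattenNorm p B = S ^ (1 / p) := rfl
  have hSnn : 0 ≤ S := Finset.sum_nonneg fun j _ => Real.rpow_nonneg (hs j) _
  have hTnn : 0 ≤ T := le_of_lt hT
  have hθ : (0:ℝ) ≤ (p - 1) / p := div_nonneg (by linarith) (le_of_lt hp0)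
  have hinvp : (0:ℝ) < 1 / p := by positivity
  have hRHSnn : 0 ≤ T ^ ((p - 1) / p) * S ^ (1 / p) :=
    mul_nonneg (Real.rpow_nonneg hTnn _) (Real.rpow_nonneg hSnn _)
  rw [hsch]
  refine le_trans step1 ?_
  rcases eq_or_lt_of_le hSnn with hS0 | hSpos
  · -- S = 0 : all singular values vanish
    have hsz : ∀ j, s j = 0 := by
      intro j
      by_contra hne
      have hpos : 0 < s j := lt_of_le_of_ne (hs j) (Ne.symm hne)
      have : 0 < s j ^ p := Real.rpow_pos_of_pos hpos p
      have hle : s j ^ p ≤ S := Finset.single_le_sum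
        (fun j _ => Real.rpow_nonneg (hs j) p) (Finset.mem_univ j)
      rw [← hS0] at hle
      linarith
    have : ∑ r, ∑ j, (σ r ^ (p - 1) * s j) * m r j = 0 := by
      refine Finset.sum_eq_zero fun r _ => Finset.sum_eq_zero fun j _ => by
        rw [hsz j]; ring
    rw [this, ← hS0, Real.zero_rpow (ne_of_gt hinvp), mul_zero]
  · -- S > 0 : the weighted AM-GM argument
    have hkey2 : ∀ r j, σ r ^ (p - 1) * s j ≤ T ^ ((p - 1) / p) * S ^ (1 / p) *
        (((p - 1) / p) * (σ r ^ p / T) + (1 / p) * (s j ^ p / S)) := by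
      intro r j
      have hσr := le_of_lt (hσ r)
      have h1 : σ r ^ (p - 1) = (σ r ^ p / T) ^ ((p - 1) / p) * T ^ ((p - 1) / p) := by
        rw [← Real.mul_rpow (by positivity) hTnn, div_mul_cancel₀ _ (ne_of_gt hT),
          ← Real.rpow_mul hσr]
        congr 1
        field_simp
      have h2 : s j = (s j ^ p / S) ^ (1 / p) * S ^ (1 / p) := by
        rw [← Real.mul_rpow (by positivity) hSnn, div_mul_cancel₀ _ (ne_of_gt hSpos),
          ← Real.rpow_mul (hs j)]
        rw [mul_one_div, div_self (ne_of_gt hp0), Real.rpow_one]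
      calc σ r ^ (p - 1) * s j
          = T ^ ((p - 1) / p) * S ^ (1 / p) *
            ((σ r ^ p / T) ^ ((p - 1) / p) * (s j ^ p / S) ^ (1 / p)) := by
            rw [h1]
            nth_rewrite 1 [h2]
            ring
        _ ≤ T ^ ((p - 1) / p) * S ^ (1 / p) *
            (((p - 1) / p) * (σ r ^ p / T) + (1 / p) * (s j ^ p / S)) := by
            refine mul_le_mul_of_nonneg_left ?_ hRHSnn
            refine Real.geom_mean_le_arith_mean2_weighted hθ (le_of_lt hinvp)
              (by positivity) (div_nonneg (Real.rpow_nonneg (hs j) _) hSnn) ?_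
            field_simp
            ring
    calc ∑ r, ∑ j, (σ r ^ (p - 1) * s j) * m r j
        ≤ ∑ r, ∑ j, (T ^ ((p - 1) / p) * S ^ (1 / p) *
            (((p - 1) / p) * (σ r ^ p / T) + (1 / p) * (s j ^ p / S))) * m r j := by
          refine Finset.sum_le_sum fun r _ => Finset.sum_le_sum fun j _ =>
            mul_le_mul_of_nonneg_right (hkey2 r j) (hm0 r j)
      _ = T ^ ((p - 1) / p) * S ^ (1 / p) *
            (((p - 1) / p) / T * ∑ r, σ r ^ p * ∑ j, m r j
              + (1 / p) / S * ∑ j, s j ^ p * ∑ r, m r j) := by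
          have factor : ∑ r, ∑ j, (T ^ ((p - 1) / p) * S ^ (1 / p) *
                (((p - 1) / p) * (σ r ^ p / T) + (1 / p) * (s j ^ p / S))) * m r j
              = T ^ ((p - 1) / p) * S ^ (1 / p) *
                ∑ r, ∑ j, (((p - 1) / p) * (σ r ^ p / T) + (1 / p) * (s j ^ p / S)) * m r j := by
            rw [Finset.mul_sum]
            refine Finset.sum_congr rfl fun r _ => ?_
            rw [Finset.mul_sum]
            exact Finset.sum_congr rfl fun j _ => by ring
          rw [factor]
          congr 1
          calc ∑ r, ∑ j, (((p - 1) / p) * (σ r ^ p / T) + (1 / p) * (s j ^ p / S)) * m r j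
              = ∑ r, ∑ j, (((p - 1) / p) / T * (σ r ^ p * m r j)
                  + (1 / p) / S * (s j ^ p * m r j)) :=
                Finset.sum_congr rfl fun r _ => Finset.sum_congr rfl fun j _ => by ring
            _ = ∑ r, ∑ j, ((p - 1) / p) / T * (σ r ^ p * m r j)
                  + ∑ r, ∑ j, (1 / p) / S * (s j ^ p * m r j) := by
                rw [← Finset.sum_add_distrib]
                exact Finset.sum_congr rfl fun r _ => Finset.sum_add_distrib
            _ = ((p - 1) / p) / T * ∑ r, σ r ^ p * ∑ j, m r j
                  + (1 / p) / S * ∑ j, s j ^ p * ∑ r, m r j := by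
                congr 1
                · rw [Finset.mul_sum]
                  refine Finset.sum_congr rfl fun r _ => ?_
                  rw [Finset.mul_sum, Finset.mul_sum]
                  try exact Finset.sum_congr rfl fun j _ => by ring
                · rw [Finset.sum_comm]
                  rw [Finset.mul_sum]
                  refine Finset.sum_congr rfl fun j _ => ?_
                  rw [Finset.mul_sum, Finset.mul_sum]
                  try exact Finset.sum_congr rfl fun r _ => by ring
      _ ≤ T ^ ((p - 1) / p) * S ^ (1 / p) * 1 := by
          refine mul_le_mul_of_nonneg_left ?_ hRHSnn
          have e1 : ∑ r, σ r ^ p * ∑ j, m r j ≤ T := by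
            rw [hTdef]
            refine Finset.sum_le_sum fun r _ => ?_
            calc σ r ^ p * ∑ j, m r j ≤ σ r ^ p * 1 :=
                  mul_le_mul_of_nonneg_left (hmrow r) (Real.rpow_nonneg (le_of_lt (hσ r)) _)
              _ = σ r ^ p := mul_one _
          have e2 : ∑ j, s j ^ p * ∑ r, m r j ≤ S := by
            rw [hSdef]
            refine Finset.sum_le_sum fun j _ => ?_
            calc s j ^ p * ∑ r, m r j ≤ s j ^ p * 1 :=
                  mul_le_mul_of_nonneg_left (hmcol j) (Real.rpow_nonneg (hs j) _)
              _ = s j ^ p := mul_one _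
          have e1' : ((p - 1) / p) / T * (∑ r, σ r ^ p * ∑ j, m r j) ≤ (p - 1) / p := by
            calc ((p - 1) / p) / T * (∑ r, σ r ^ p * ∑ j, m r j)
                ≤ ((p - 1) / p) / T * T :=
                  mul_le_mul_of_nonneg_left e1 (div_nonneg hθ hTnn)
              _ = (p - 1) / p := div_mul_cancel₀ _ (ne_of_gt hT)
          have e2' : (1 / p) / S * (∑ j, s j ^ p * ∑ r, m r j) ≤ 1 / p := by
            calc (1 / p) / S * (∑ j, s j ^ p * ∑ r, m r j)
                ≤ (1 / p) / S * S :=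
                  mul_le_mul_of_nonneg_left e2 (div_nonneg (le_of_lt hinvp) hSnn)
              _ = 1 / p := div_mul_cancel₀ _ (ne_of_gt hSpos)
            
          have : (p - 1) / p + 1 / p = 1 := by field_simp; ring
          linarith
      _ = T ^ ((p - 1) / p) * S ^ (1 / p) := mul_one _

section helpers
variable {k l ρ : ℕ}

lemma frobInner_smul (c : ℝ) (C M : Matrix (Fin k) (Fin l) ℝ) :
    frobInner (c • C) M = c * frobInner C M := by
  simp only [frobInner, Matrix.smul_apply, smul_eq_mul, Finset.mul_sum]
  exact Finset.sum_congr rfl fun i _ => Finset.sum_congr rfl fun j _ => by ring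

lemma frobInner_sub (C M N : Matrix (Fin k) (Fin l) ℝ) :
    frobInner C (M - N) = frobInner C M - frobInner C N := by
  simp only [frobInner, Matrix.sub_apply, mul_sub, Finset.sum_sub_distrib]

lemma frobInner_sum_left (c : Fin ρ → ℝ) (u : Fin ρ → EuclideanSpace ℝ (Fin k))
    (v : Fin ρ → EuclideanSpace ℝ (Fin l)) (M : Matrix (Fin k) (Fin l) ℝ) :
    frobInner (∑ r, c r • Matrix.vecMulVec (fun i => u r i) (fun j => v r j)) M
      = ∑ r, c r * ∑ i, ∑ j, u r i * M i j * v r j := by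
  simp only [frobInner, Matrix.sum_apply, Matrix.smul_apply, Matrix.vecMulVec_apply,
    smul_eq_mul]
  calc ∑ i, ∑ j, (∑ r, c r * (u r i * v r j)) * M i j
      = ∑ i, ∑ j, ∑ r, c r * (u r i * M i j * v r j) := by
        refine Finset.sum_congr rfl fun i _ => Finset.sum_congr rfl fun j _ => ?_
        rw [Finset.sum_mul]
        exact Finset.sum_congr rfl fun r _ => by ring
    _ = ∑ r, ∑ i, ∑ j, c r * (u r i * M i j * v r j) := by
        rw [show (∑ i, ∑ j, ∑ r, c r * (u r i * M i j * v r j))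
            = ∑ i, ∑ r, ∑ j, c r * (u r i * M i j * v r j) from
          Finset.sum_congr rfl fun i _ => Finset.sum_comm]
        exact Finset.sum_comm
    _ = ∑ r, c r * ∑ i, ∑ j, u r i * M i j * v r j := by
        refine Finset.sum_congr rfl fun r _ => ?_
        rw [Finset.mul_sum]
        exact Finset.sum_congr rfl fun i _ => by rw [Finset.mul_sum]
end helpers

/-- Subgradient formula for `B ↦ ‖B‖_{S_p}^q` at a nonzero matrix `A` with compact SVD
`A = ∑_r σ_r u_r v_rᵀ`: the matrix `G = q‖A‖_{S_p}^{q−p} ∑_r σ_r^{p−1} u_r v_rᵀ` satisfies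
the subgradient inequality `‖B‖_{S_p}^q ≥ ‖A‖_{S_p}^q + ⟨G, B − A⟩` for all `B`. -/
theorem schatten_power_subgradient
    {k l ρ : ℕ} (p q : ℝ) (hp : 1 ≤ p) (hq : 1 ≤ q)
    (A : Matrix (Fin k) (Fin l) ℝ) (hA0 : A ≠ 0)
    (σ : Fin ρ → ℝ) (hσ : ∀ r, 0 < σ r)
    (u : Fin ρ → EuclideanSpace ℝ (Fin k)) (v : Fin ρ → EuclideanSpace ℝ (Fin l))
    (hu : Orthonormal ℝ u) (hv : Orthonormal ℝ v)
    (hSVD : A = ∑ r, σ r • Matrix.vecMulVec (fun i => u r i) (fun j => v r j))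
    (G : Matrix (Fin k) (Fin l) ℝ)
    (hG : G = (q * schattenNorm p A ^ (q - p)) •
        ∑ r, σ r ^ (p - 1) • Matrix.vecMulVec (fun i => u r i) (fun j => v r j)) :
    ∀ B : Matrix (Fin k) (Fin l) ℝ,
      schattenNorm p B ^ q ≥ schattenNorm p A ^ q + frobInner G (B - A) := by
  intro B
  classical
  have hp0 : (0:ℝ) < p := lt_of_lt_of_le one_pos hp
  have hρ : 0 < ρ := by
    rcases Nat.eq_zero_or_pos ρ with h | h
    · exfalso
      apply hA0
      rw [hSVD]
      subst h
      simp
    · exact h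
  have : Nonempty (Fin ρ) := ⟨⟨0, hρ⟩⟩
  set T : ℝ := ∑ r, σ r ^ p with hTdef
  have hT : 0 < T := Finset.sum_pos (fun r _ => Real.rpow_pos_of_pos (hσ r) p)
    Finset.univ_nonempty
  -- orthonormality as sums
  have huu : ∀ r r', ∑ t, u r t * u r' t = if r = r' then 1 else 0 := by
    intro r r'
    have h0 := (orthonormal_iff_ite.mp hu) r r'
    rw [euclid_inner_eq] at h0
    exact h0
  have hvv : ∀ r r', ∑ t, v r t * v r' t = if r = r' then 1 else 0 := by
    intro r r'
    have h0 := (orthonormal_iff_ite.mp hv) r r'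
    rw [euclid_inner_eq] at h0
    exact h0
  -- A^H A
  have hAHA : Aᴴ * A = ∑ r, (σ r * σ r) • Matrix.vecMulVec (fun i => v r i) (fun j => v r j) := by
    ext a b
    have hAapp : ∀ t c, A t c = ∑ r, σ r * (u r t * v r c) := by
      intro t c
      rw [hSVD]
      simp [Matrix.sum_apply, Matrix.vecMulVec_apply]
    calc (Aᴴ * A) a b = ∑ t, A t a * A t b := by
          simp [Matrix.mul_apply, Matrix.conjTranspose_apply]
      _ = ∑ t, ∑ r, ∑ s, (σ r * σ s * (v r a * v s b)) * (u r t * u s t) := by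
          refine Finset.sum_congr rfl fun t _ => ?_
          rw [hAapp t a, hAapp t b, Finset.sum_mul_sum]
          exact Finset.sum_congr rfl fun r _ => Finset.sum_congr rfl fun s _ => by ring
      _ = ∑ r, ∑ s, (σ r * σ s * (v r a * v s b)) * ∑ t, u r t * u s t := by
          rw [Finset.sum_comm]
          refine Finset.sum_congr rfl fun r _ => ?_
          rw [Finset.sum_comm]
          refine Finset.sum_congr rfl fun s _ => ?_
          rw [Finset.mul_sum]
      _ = ∑ r, σ r * σ r * (v r a * v r b) := by
          refine Finset.sum_congr rfl fun r _ => ?_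
          rw [Finset.sum_eq_single r]
          · rw [huu r r]
            simp
          · intro s _ hs
            rw [huu r s, if_neg (fun hc => hs hc.symm), mul_zero]
          · simp
      _ = (∑ r, (σ r * σ r) • Matrix.vecMulVec (fun i => v r i) (fun j => v r j)) a b := by
          simp [Matrix.sum_apply, Matrix.vecMulVec_apply, mul_assoc]
  -- Schatten norm of A
  have hTA : ∑ j, Real.sqrt ((Matrix.isHermitian_conjTranspose_mul_self A).eigenvalues j) ^ p
      = T := by
    rw [sum_f_eigenvalues (fun t => Real.sqrt t ^ p)
      (by simp [Real.zero_rpow (ne_of_gt hp0)])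
      (Aᴴ * A) (Matrix.isHermitian_conjTranspose_mul_self A)
      (fun r => σ r * σ r) v hv hAHA]
    exact Finset.sum_congr rfl fun r _ => by
      rw [Real.sqrt_mul_self (le_of_lt (hσ r))]
  have ha : schattenNorm p A = T ^ (1 / p) := by rw [schattenNorm, hTA]
  have hapos : 0 < schattenNorm p A := by
    rw [ha]
    exact Real.rpow_pos_of_pos hT _
  -- frobInner computations
  have hdiagA : ∀ r, ∑ i, ∑ j, u r i * A i j * v r j = σ r := by
    intro r
    calc ∑ i, ∑ j, u r i * A i j * v r j
        = ∑ i, ∑ j, ∑ s, σ s * ((u r i * u s i) * (v s j * v r j)) := by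
          refine Finset.sum_congr rfl fun i _ => Finset.sum_congr rfl fun j _ => ?_
          rw [show A i j = ∑ s, σ s * (u s i * v s j) from by
            rw [hSVD]; simp [Matrix.sum_apply, Matrix.vecMulVec_apply]]
          rw [Finset.mul_sum, Finset.sum_mul]
          exact Finset.sum_congr rfl fun s _ => by ring
      _ = ∑ s, ∑ i, ∑ j, σ s * ((u r i * u s i) * (v s j * v r j)) := by
          rw [show (∑ i, ∑ j, ∑ s, σ s * ((u r i * u s i) * (v s j * v r j)))
              = ∑ i, ∑ s, ∑ j, σ s * ((u r i * u s i) * (v s j * v r j)) from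
            Finset.sum_congr rfl fun i _ => Finset.sum_comm]
          exact Finset.sum_comm
      _ = ∑ s, σ s * ((∑ i, u r i * u s i) * (∑ j, v s j * v r j)) := by
          refine Finset.sum_congr rfl fun s _ => ?_
          calc ∑ i, ∑ j, σ s * ((u r i * u s i) * (v s j * v r j))
              = ∑ i, σ s * ((u r i * u s i) * ∑ j, v s j * v r j) := by
                refine Finset.sum_congr rfl fun i _ => ?_
                rw [Finset.mul_sum, Finset.mul_sum]
                try exact Finset.sum_congr rfl fun j _ => by ring
            _ = σ s * ((∑ i, u r i * u s i) * (∑ j, v s j * v r j)) := by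
                rw [Finset.sum_mul, Finset.mul_sum]
                try exact Finset.sum_congr rfl fun i _ => by ring
      _ = σ r := by
          rw [Finset.sum_eq_single r]
          · rw [huu r r, hvv r r]
            simp
          · intro s _ hs
            rw [huu r s, if_neg (fun hc => hs hc.symm)]
            simp
          · simp
  -- assemble
  set C : Matrix (Fin k) (Fin l) ℝ :=
    ∑ r, σ r ^ (p - 1) • Matrix.vecMulVec (fun i => u r i) (fun j => v r j) with hCdef
  have hfC_A : frobInner C A = T := by
    rw [hCdef, frobInner_sum_left, hTdef]
    refine Finset.sum_congr rfl fun r _ => ?_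
    rw [hdiagA r]
    have h := Real.rpow_add_one (ne_of_gt (hσ r)) (p - 1)
    rw [sub_add_cancel] at h
    exact h.symm
  have hfC_B : frobInner C B ≤ T ^ ((p - 1) / p) * schattenNorm p B := by
    rw [hCdef, frobInner_sum_left]
    exact trace_bound p hp σ hσ hT u v hu hv B
  rw [hG, frobInner_smul, frobInner_sub]
  set x := schattenNorm p B with hx
  set a := schattenNorm p A with hadef2
  have hx0 : 0 ≤ x := by
    rw [hx, schattenNorm]
    apply Real.rpow_nonneg
    exact Finset.sum_nonneg fun j _ => Real.rpow_nonneg (Real.sqrt_nonneg _) _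
  have hc0 : 0 ≤ q * a ^ (q - p) :=
    mul_nonneg (by linarith) (Real.rpow_nonneg (le_of_lt hapos) _)
  have hub : frobInner C B - frobInner C A ≤ T ^ ((p - 1) / p) * x - T := by
    rw [hfC_A]
    have := hfC_B
    linarith
  have hmul := mul_le_mul_of_nonneg_left hub hc0
  have hid1 : a ^ (q - p) * T ^ ((p - 1) / p) = a ^ (q - 1) := by
    rw [ha, ← Real.rpow_mul (le_of_lt hT), ← Real.rpow_mul (le_of_lt hT),
      ← Real.rpow_add hT]
    congr 1 <;> (try field_simp) <;> (try ring)
  have hid2 : a ^ (q - p) * T = a ^ q := by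
    rw [ha, ← Real.rpow_mul (le_of_lt hT), ← Real.rpow_mul (le_of_lt hT)]
    nth_rewrite 2 [← Real.rpow_one T]
    rw [← Real.rpow_add hT]
    congr 1 <;> (try field_simp) <;> (try ring)
  have hexp : (q * a ^ (q - p)) * (T ^ ((p - 1) / p) * x - T) = q * a ^ (q - 1) * x - q * a ^ q := by
    rw [mul_sub]
    congr 1
    · rw [show (q * a ^ (q - p)) * (T ^ ((p - 1) / p) * x)
        = q * (a ^ (q - p) * T ^ ((p - 1) / p)) * x from by ring, hid1]
    · rw [show (q * a ^ (q - p)) * T = q * (a ^ (q - p) * T) from by ring, hid2]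
  have hbern : a ^ q + q * a ^ (q - 1) * x - q * a ^ q ≤ x ^ q := by
    have hs : -1 ≤ x / a - 1 := by
      have : 0 ≤ x / a := div_nonneg hx0 (le_of_lt hapos)
      linarith
    have h1 := one_add_mul_self_le_rpow_one_add hs hq
    rw [show (1 : ℝ) + (x / a - 1) = x / a from by ring] at h1
    have haq : 0 < a ^ q := Real.rpow_pos_of_pos hapos q
    have hdivq : (x / a) ^ q = x ^ q / a ^ q := Real.div_rpow hx0 (le_of_lt hapos) q
    rw [hdivq] at h1
    have h2 := mul_le_mul_of_nonneg_right h1 (le_of_lt haq)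
    rw [div_mul_cancel₀ _ (ne_of_gt haq)] at h2
    have ha1 : a ^ (q - 1) = a ^ q / a := by
      rw [Real.rpow_sub hapos, Real.rpow_one]
    calc a ^ q + q * a ^ (q - 1) * x - q * a ^ q
        = (1 + q * (x / a - 1)) * a ^ q := by
          rw [ha1]
          field_simp
          ring
      _ ≤ x ^ q := h2
  rw [ge_iff_le]
  calc a ^ q + q * a ^ (q - p) * (frobInner C B - frobInner C A)
      ≤ a ^ q + (q * a ^ (q - p)) * (T ^ ((p - 1) / p) * x - T) := by linarith
    _ = a ^ q + (q * a ^ (q - 1) * x - q * a ^ q) := by rw [hexp]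
    _ ≤ x ^ q := by linarith
end
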